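/- Let f : ℝ^n → ℝ_{>0} be twice continuously differentiable, convex, 2γ-second order robust and γ²-multiplicatively smooth with respect to the ℓ₁ norm. For any x ∈ ℝ^n, any coordinate i, and update x' = x - η ∇_i f(x) e_i with step size η = (1/2)min{1/(γ² f(x)), 1/(γ|∇_i f(x)|)}, the function value decreases by at least f(x) - f(x') ≥ min{ (∇_i f(x))² / (4γ² f(x)), |∇_i f(x)|/(4γ) } ≥ 0. -/

import Mathlib

open Real

/-- Coordinate update progress for a positive, convex, twice continuously
differentiable function that is 2γ-second order robust and γ²-multiplicatively
smooth with respect to the ℓ₁ norm. -/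
theorem coordinate_update_progress
    {n : ℕ} (f : (Fin n → ℝ) → ℝ) (γ : ℝ) (hγ : 0 < γ)
    (hf : ContDiff ℝ 2 f) (hpos : ∀ x, 0 < f x) (hconv : ConvexOn ℝ Set.univ f)
    (Q : (Fin n → ℝ) → (Fin n → ℝ) → ℝ)
    (hQ : ∀ z y, Q z y = fderiv ℝ (fun u => fderiv ℝ f u y) z y)
    -- 2γ-second order robustness w.r.t. ℓ₁
    (hrob : ∀ a b y, (∑ i, |b i - a i|) ≤ 1 / (2 * γ) →
      (1 / 2) * Q a y ≤ Q b y ∧ Q b y ≤ 2 * Q a y)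
    -- γ²-multiplicative smoothness w.r.t. ℓ₁
    (hms : ∀ z y, Q z y ≤ γ ^ 2 * f z * (∑ i, |y i|) ^ 2)
    (x : Fin n → ℝ) (i : Fin n)
    (D : ℝ) (hD : D = fderiv ℝ f x (Pi.single i 1))
    (η : ℝ) (hη : η = (1 / 2) * min (1 / (γ ^ 2 * f x)) (1 / (γ * |D|)))
    (x' : Fin n → ℝ) (hx' : x' = x - (η * D) • (Pi.single i 1 : Fin n → ℝ)) :
    f x - f x' ≥ min (D ^ 2 / (4 * γ ^ 2 * f x)) (|D| / (4 * γ)) ∧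
      0 ≤ min (D ^ 2 / (4 * γ ^ 2 * f x)) (|D| / (4 * γ)) := by
  have hfx : 0 < f x := hpos x
  have hmin0 : 0 ≤ min (D ^ 2 / (4 * γ ^ 2 * f x)) (|D| / (4 * γ)) := by
    apply le_min
    · positivity
    · positivity
  refine ⟨?_, hmin0⟩
  rcases eq_or_ne D 0 with hD0 | hD0
  · rw [hD0] at hx' ⊢
    simp only [mul_zero, zero_smul, sub_zero] at hx'
    subst hx'
    simp
  -- main case : D ≠ 0
  have habsD : 0 < |D| := abs_pos.mpr hD0
  have hηpos : 0 < η := by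
    rw [hη]
    apply mul_pos (by norm_num)
    exact lt_min (by positivity) (by positivity)
  have hη1 : γ ^ 2 * f x * η ≤ 1 / 2 := by
    have h := min_le_left (1 / (γ ^ 2 * f x)) (1 / (γ * |D|))
    have h2 : η ≤ (1 / 2) * (1 / (γ ^ 2 * f x)) := by
      rw [hη]; apply mul_le_mul_of_nonneg_left h (by norm_num)
    calc γ ^ 2 * f x * η ≤ γ ^ 2 * f x * ((1 / 2) * (1 / (γ ^ 2 * f x))) := by
          apply mul_le_mul_of_nonneg_left h2 (by positivity)
      _ = 1 / 2 := by field_simp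
  have hη2 : γ * |D| * η ≤ 1 / 2 := by
    have h := min_le_right (1 / (γ ^ 2 * f x)) (1 / (γ * |D|))
    have h2 : η ≤ (1 / 2) * (1 / (γ * |D|)) := by
      rw [hη]; apply mul_le_mul_of_nonneg_left h (by norm_num)
    calc γ * |D| * η ≤ γ * |D| * ((1 / 2) * (1 / (γ * |D|))) := by
          apply mul_le_mul_of_nonneg_left h2 (by positivity)
      _ = 1 / 2 := by field_simp
  set e : Fin n → ℝ := Pi.single i 1 with he
  set y : Fin n → ℝ := (-(η * D)) • e with hy
  have hx'' : x' = x + y := by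
    rw [hx', hy, neg_smul, sub_eq_add_neg]
  have hsum_e : (∑ j, |e j|) = 1 := by
    rw [he]
    simp [Pi.single_apply, apply_ite (|·|)]
  have hsy : (∑ j, |y j|) = η * |D| := by
    have hterm : ∀ j, |y j| = η * |D| * |e j| := by
      intro j
      rw [hy]
      simp only [Pi.smul_apply, smul_eq_mul, abs_mul, abs_neg]
      rw [abs_of_pos hηpos]
    rw [Finset.sum_congr rfl fun j _ => hterm j, ← Finset.mul_sum, hsum_e, mul_one]
  have hyd : η * |D| ≤ 1 / (2 * γ) := by
    rw [le_div_iff₀ (by positivity : (0:ℝ) < 2 * γ)]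
    nlinarith
  have hdist : ∀ t ∈ Set.Icc (0:ℝ) 1, (∑ j, |(x + t • y) j - x j|) ≤ 1 / (2 * γ) := by
    intro t ht
    have hterm : ∀ j, |(x + t • y) j - x j| = |t| * |y j| := by
      intro j
      simp [abs_mul]
    calc (∑ j, |(x + t • y) j - x j|) = |t| * (η * |D|) := by
          rw [Finset.sum_congr rfl fun j _ => hterm j, ← Finset.mul_sum, hsy]
      _ ≤ 1 * (η * |D|) := by
          apply mul_le_mul_of_nonneg_right _ (by positivity)
          rw [abs_of_nonneg ht.1]; exact ht.2
      _ ≤ 1 / (2 * γ) := by rw [one_mul]; exact hyd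
  -- differentiability facts
  have hfd : Differentiable ℝ f := hf.differentiable (by norm_num)
  have hF : Differentiable ℝ (fderiv ℝ f) :=
    (hf.fderiv_right (m := 1) (by norm_num)).differentiable one_ne_zero
  have hL : ∀ t : ℝ, HasDerivAt (fun t : ℝ => x + t • y) y t := by
    intro t
    simpa using ((hasDerivAt_id t).smul_const y).const_add x
  have hg : ∀ t : ℝ, HasDerivAt (fun s : ℝ => f (x + s • y)) (fderiv ℝ f (x + t • y) y) t := by
    intro t
    exact ((hfd (x + t • y)).hasFDerivAt).comp_hasDerivAt t (hL t)
  have hψ : Differentiable ℝ (fun u => fderiv ℝ f u y) := hF.clm_apply (differentiable_const y)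
  have hg' : ∀ t : ℝ, HasDerivAt (fun s : ℝ => fderiv ℝ f (x + s • y) y) (Q (x + t • y) y) t := by
    intro t
    rw [hQ]
    exact ((hψ (x + t • y)).hasFDerivAt).comp_hasDerivAt t (hL t)
  set C : ℝ := γ ^ 2 * f x * (η * |D|) ^ 2 with hCdef
  have hQbound : ∀ t ∈ Set.Icc (0:ℝ) 1, Q (x + t • y) y ≤ 2 * C := by
    intro t ht
    have h1 := (hrob x (x + t • y) y (hdist t ht)).2
    have h2 := hms x y
    rw [hsy] at h2
    calc Q (x + t • y) y ≤ 2 * Q x y := h1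
      _ ≤ 2 * C := by rw [hCdef]; linarith
  set c0 : ℝ := fderiv ℝ f x y with hc0
  have hc0val : c0 = -(η * D) * D := by
    rw [hc0, hy, ContinuousLinearMap.map_smul, smul_eq_mul, he, ← hD]
  -- auxiliary functions for Taylor-type bound
  set φ : ℝ → ℝ := fun t => f x + c0 * t + C * t ^ 2 - f (x + t • y) with hφdef
  set φ' : ℝ → ℝ := fun t => c0 + 2 * C * t - fderiv ℝ f (x + t • y) y with hφ'def
  have hφd : ∀ t : ℝ, HasDerivAt φ (φ' t) t := by
    intro t
    have h1 : HasDerivAt (fun t : ℝ => c0 * t) c0 t := by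
      simpa using (hasDerivAt_id t).const_mul c0
    have h2 : HasDerivAt (fun t : ℝ => C * t ^ 2) (C * (2 * t)) t := by
      simpa using (hasDerivAt_pow 2 t).const_mul C
    have := ((h1.const_add (f x)).add h2).sub (hg t)
    refine this.congr_deriv ?_
    simp only [hφ'def]; ring
  have hφ'd : ∀ t : ℝ, HasDerivAt φ' (2 * C - Q (x + t • y) y) t := by
    intro t
    have h1 : HasDerivAt (fun t : ℝ => 2 * C * t) (2 * C) t := by
      simpa using (hasDerivAt_id t).const_mul (2 * C)
    exact (h1.const_add c0).sub (hg' t)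
  -- φ' is monotone on [0,1]
  have hφ'mono : MonotoneOn φ' (Set.Icc 0 1) := by
    apply monotoneOn_of_deriv_nonneg (convex_Icc 0 1)
    · exact (Differentiable.continuous (fun t => (hφ'd t).differentiableAt)).continuousOn
    · exact fun t _ => ((hφ'd t).differentiableAt).differentiableWithinAt
    · intro t ht
      rw [interior_Icc] at ht
      rw [(hφ'd t).deriv]
      have := hQbound t ⟨le_of_lt ht.1, le_of_lt ht.2⟩
      linarith
  have hφ'0 : φ' 0 = 0 := by
    rw [hφ'def]
    simp [← hc0]
  have hφ'nonneg : ∀ t ∈ Set.Icc (0:ℝ) 1, 0 ≤ φ' t := by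
    intro t ht
    have := hφ'mono (Set.left_mem_Icc.mpr zero_le_one) ht ht.1
    rw [hφ'0] at this
    exact this
  have hφmono : MonotoneOn φ (Set.Icc 0 1) := by
    apply monotoneOn_of_deriv_nonneg (convex_Icc 0 1)
    · exact (Differentiable.continuous (fun t => (hφd t).differentiableAt)).continuousOn
    · exact fun t _ => ((hφd t).differentiableAt).differentiableWithinAt
    · intro t ht
      rw [interior_Icc] at ht
      rw [(hφd t).deriv]
      exact hφ'nonneg t ⟨le_of_lt ht.1, le_of_lt ht.2⟩
  have hφ0 : φ 0 = 0 := by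
    rw [hφdef]; simp
  have hφ1 : 0 ≤ φ 1 := by
    have := hφmono (Set.left_mem_Icc.mpr zero_le_one) (Set.right_mem_Icc.mpr zero_le_one)
      zero_le_one
    rw [hφ0] at this
    exact this
  have hφ1' : φ 1 = f x + c0 + C - f x' := by
    rw [hφdef, hx'']
    simp
  -- conclude the decrease bound
  have hdec : f x - f x' ≥ η * D ^ 2 / 2 := by
    have hC : C ≤ η * D ^ 2 / 2 := by
      have hsq : |D| ^ 2 = D ^ 2 := sq_abs D
      rw [hCdef]
      have : γ ^ 2 * f x * (η * |D|) ^ 2 = (γ ^ 2 * f x * η) * (η * D ^ 2) := by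
        rw [← hsq]; ring
      rw [this]
      calc γ ^ 2 * f x * η * (η * D ^ 2) ≤ (1 / 2) * (η * D ^ 2) := by
            apply mul_le_mul_of_nonneg_right hη1 (by positivity)
        _ = η * D ^ 2 / 2 := by ring
    rw [hφ1', hc0val] at hφ1
    nlinarith
  have hkey : min (D ^ 2 / (4 * γ ^ 2 * f x)) (|D| / (4 * γ)) ≤ η * D ^ 2 / 2 := by
    rcases le_total (1 / (γ ^ 2 * f x)) (1 / (γ * |D|)) with hc | hc
    · have hηeq : η = (1 / 2) * (1 / (γ ^ 2 * f x)) := by rw [hη, min_eq_left hc]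
      have : η * D ^ 2 / 2 = D ^ 2 / (4 * γ ^ 2 * f x) := by
        rw [hηeq]; field_simp; ring
      rw [this]
      exact min_le_left _ _
    · have hηeq : η = (1 / 2) * (1 / (γ * |D|)) := by rw [hη, min_eq_right hc]
      have : η * D ^ 2 / 2 = |D| / (4 * γ) := by
        rw [hηeq, ← sq_abs D]
        field_simp
        ring
      rw [this]
      exact min_le_right _ _
  linarith
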